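/- Let k >= 1 and let p = (p_0,...,p_k) be a probability vector with all entries positive, and let p_max denote the second largest of p_0,...,p_k. Then the sum over j = 0,...,k-1 of 2 q_j^* log_2(4/q_j^*) (where q_j = p_0+...+p_j and q_j^* = min(q_j, 1-q_j)) is at most k(k+1) * p_max * log_2(4/p_max), and hence at most 3 k^2 p_max log(4/p_max) (natural logarithm). -/

import Mathlib

private lemma log4_gt_one : 1 < Real.log 4 := by
  have h2 : (0.6931471803 : ℝ) < Real.log 2 := Real.log_two_gt_d9
  have h4 : Real.log 4 = 2 * Real.log 2 := by
    rw [show (4:ℝ) = 2^2 by norm_num, Real.log_pow]; push_cast; ring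
  nlinarith

private lemma f_mono {x y : ℝ} (hx : 0 < x) (hxy : x ≤ y) (hy1 : y ≤ 1) :
    x * Real.log (4 / x) ≤ y * Real.log (4 / y) := by
  have hy : 0 < y := lt_of_lt_of_le hx hxy
  have h1 : Real.log (4 / x) = Real.log 4 - Real.log x := Real.log_div (by norm_num) hx.ne'
  have h2 : Real.log (4 / y) = Real.log 4 - Real.log y := Real.log_div (by norm_num) hy.ne'
  have hlog : x * Real.log y - x * Real.log x ≤ y - x := by
    have h := Real.log_le_sub_one_of_pos (show 0 < y / x from div_pos hy hx)
    have h' := mul_le_mul_of_nonneg_left h hx.le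
    have hxx : x * (y / x) = y := by field_simp
    rw [Real.log_div hy.ne' hx.ne'] at h'
    nlinarith
  have h4 : 1 ≤ Real.log 4 - Real.log y := by
    have hly : Real.log y ≤ 0 := Real.log_nonpos hy.le hy1
    have := log4_gt_one
    linarith
  rw [h1, h2]
  nlinarith [mul_le_mul_of_nonneg_left h4 (sub_nonneg.mpr hxy)]

private lemma f_subadd {x y : ℝ} (hx : 0 < x) (hy : 0 < y) :
    (x + y) * Real.log (4 / (x + y)) ≤ x * Real.log (4 / x) + y * Real.log (4 / y) := by
  have hxy : 0 < x + y := by linarith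
  rw [Real.log_div (by norm_num) hx.ne', Real.log_div (by norm_num) hy.ne',
      Real.log_div (by norm_num) hxy.ne']
  have h1 : Real.log x ≤ Real.log (x + y) := Real.log_le_log hx (by linarith)
  have h2 : Real.log y ≤ Real.log (x + y) := Real.log_le_log hy (by linarith)
  nlinarith [mul_le_mul_of_nonneg_left h1 hx.le, mul_le_mul_of_nonneg_left h2 hy.le]

private lemma f_sum_subadd {ι : Type*} (T : Finset ι) (g : ι → ℝ)
    (h : ∀ i ∈ T, 0 < g i) :
    (∑ i ∈ T, g i) * Real.log (4 / ∑ i ∈ T, g i) ≤ ∑ i ∈ T, g i * Real.log (4 / g i) := by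
  induction T using Finset.cons_induction with
  | empty => simp
  | cons a T ha ih =>
    rcases T.eq_empty_or_nonempty with rfl | hT
    · simp
    · have hsum : 0 < ∑ i ∈ T, g i :=
        Finset.sum_pos (fun i hi => h i (Finset.mem_cons_of_mem hi)) hT
      have hga : 0 < g a := h a (Finset.mem_cons_self a T)
      rw [Finset.sum_cons, Finset.sum_cons]
      calc (g a + ∑ i ∈ T, g i) * Real.log (4 / (g a + ∑ i ∈ T, g i))
          ≤ g a * Real.log (4 / g a) + (∑ i ∈ T, g i) * Real.log (4 / ∑ i ∈ T, g i) :=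
            f_subadd hga hsum
        _ ≤ _ := add_le_add_right (ih (fun i hi => h i (Finset.mem_cons_of_mem hi))) _

private lemma key_bound {ι : Type*} (T : Finset ι) (p : ι → ℝ) (pmax x : ℝ) (n : ℕ)
    (hpm : 0 < pmax) (hple : pmax ≤ 1)
    (hx : 0 < x) (hpos : ∀ i ∈ T, 0 < p i) (hub : ∀ i ∈ T, p i ≤ pmax)
    (hxle : x ≤ ∑ i ∈ T, p i) (hsle : ∑ i ∈ T, p i ≤ 1)
    (hcard : T.card ≤ n) :
    x * Real.log (4 / x) ≤ n * (pmax * Real.log (4 / pmax)) := by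
  have hC0 : 0 ≤ pmax * Real.log (4 / pmax) := by
    apply mul_nonneg hpm.le
    apply Real.log_nonneg
    rw [le_div_iff₀ hpm]; linarith
  calc x * Real.log (4 / x) ≤ (∑ i ∈ T, p i) * Real.log (4 / ∑ i ∈ T, p i) :=
        f_mono hx hxle hsle
    _ ≤ ∑ i ∈ T, p i * Real.log (4 / p i) := f_sum_subadd T p hpos
    _ ≤ ∑ i ∈ T, pmax * Real.log (4 / pmax) :=
        Finset.sum_le_sum (fun i hi => f_mono (hpos i hi) (hub i hi) hple)
    _ = T.card * (pmax * Real.log (4 / pmax)) := by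
        rw [Finset.sum_const, nsmul_eq_mul]
    _ ≤ n * (pmax * Real.log (4 / pmax)) := by
        apply mul_le_mul_of_nonneg_right _ hC0
        exact_mod_cast hcard

private lemma gauss1 (n : ℕ) : ∑ j ∈ Finset.range n, 2 * (j + 1) = n * (n + 1) := by
  induction n with
  | zero => simp
  | succ n ih => rw [Finset.sum_range_succ, ih]; ring

private lemma gauss2 (n : ℕ) : ∑ j ∈ Finset.range n, 2 * (n - j) = n * (n + 1) := by
  induction n with
  | zero => simp
  | succ n ih =>
    rw [Finset.sum_range_succ']
    have : ∀ i ∈ Finset.range n, 2 * (n + 1 - (i + 1)) = 2 * (n - i) := by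
      intro i hi; omega
    rw [Finset.sum_congr rfl this, ih]
    simp
    ring

private lemma count_sum (S k : ℕ) (hSk : S ≤ k) :
    (∑ j ∈ Finset.range k, 2 * (if j < S then j + 1 else k - j)) ≤ k * (k + 1) := by
  obtain ⟨b, rfl⟩ := Nat.exists_eq_add_of_le hSk
  rw [← Finset.sum_range_add_sum_Ico _ (by omega : S ≤ S + b)]
  have h1 : ∑ j ∈ Finset.range S, 2 * (if j < S then j + 1 else S + b - j)
      = S * (S + 1) := by
    rw [Finset.sum_congr rfl (fun j hj => by
      rw [if_pos (Finset.mem_range.mp hj)]), gauss1]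
  have h2 : ∑ j ∈ Finset.Ico S (S + b), 2 * (if j < S then j + 1 else S + b - j)
      = b * (b + 1) := by
    rw [Finset.sum_Ico_eq_sum_range, show S + b - S = b from by omega]
    have : ∀ i ∈ Finset.range b,
        2 * (if S + i < S then S + i + 1 else S + b - (S + i)) = 2 * (b - i) := by
      intro i hi
      rw [if_neg (by omega)]
      omega
    rw [Finset.sum_congr rfl this, gauss2]
  rw [h1, h2]
  nlinarith
theorem sum_qstar_le_second_largest (k : ℕ) (hk : 1 ≤ k) (p : Fin (k + 1) → ℝ)
    (hpos : ∀ i, 0 < p i) (hsum : ∑ i, p i = 1)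
    (s : Fin (k + 1)) (hs : ∀ i, p i ≤ p s)
    (pmax : ℝ) (hub : ∀ i, i ≠ s → p i ≤ pmax) (hex : ∃ i, i ≠ s ∧ p i = pmax) :
    let Q : ℕ → ℝ := fun j => ∑ i ∈ Finset.univ.filter (fun i : Fin (k + 1) => (i : ℕ) ≤ j), p i
    (∑ j ∈ Finset.range k,
        2 * min (Q j) (1 - Q j) * Real.logb 2 (4 / min (Q j) (1 - Q j))) ≤
      k * (k + 1) * pmax * Real.logb 2 (4 / pmax) ∧
    (∑ j ∈ Finset.range k,
        2 * min (Q j) (1 - Q j) * Real.logb 2 (4 / min (Q j) (1 - Q j))) ≤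
      3 * k ^ 2 * pmax * Real.log (4 / pmax) := by
  intro Q
  obtain ⟨i₀, hi₀s, hi₀⟩ := hex
  have hpm : 0 < pmax := hi₀ ▸ hpos i₀
  have hple : pmax ≤ 1 := by
    have h1 := Finset.single_le_sum (f := p) (fun i _ => (hpos i).le) (Finset.mem_univ i₀)
    rw [hsum, hi₀] at h1
    exact h1
  set C := pmax * Real.log (4 / pmax) with hC
  have hC0 : 0 ≤ C := by
    apply mul_nonneg hpm.le
    apply Real.log_nonneg
    rw [le_div_iff₀ hpm]; linarith
  have hlog2 : 0 < Real.log 2 := Real.log_pos (by norm_num)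
  set S := (s : ℕ) with hSdef
  have hSk : S ≤ k := Nat.lt_succ_iff.mp s.isLt
  -- key per-j bound, with natural log
  have key : ∀ j ∈ Finset.range k,
      min (Q j) (1 - Q j) * Real.log (4 / min (Q j) (1 - Q j)) ≤
        ((if j < S then j + 1 else k - j : ℕ) : ℝ) * C := by
    intro j hj
    rw [Finset.mem_range] at hj
    set T₁ := Finset.univ.filter (fun i : Fin (k + 1) => (i : ℕ) ≤ j) with hT₁
    set T₂ := Finset.univ.filter (fun i : Fin (k + 1) => ¬ (i : ℕ) ≤ j) with hT₂
    have hQ1 : Q j = ∑ i ∈ T₁, p i := rfl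
    have hQ2 : Q j + ∑ i ∈ T₂, p i = 1 := by
      rw [hQ1, Finset.sum_filter_add_sum_filter_not, hsum]
    have hQpos : 0 < Q j := by
      rw [hQ1]
      apply Finset.sum_pos (fun i _ => hpos i)
      exact ⟨⟨0, by omega⟩, Finset.mem_filter.mpr ⟨Finset.mem_univ _, by simp⟩⟩
    have hT2pos : 0 < ∑ i ∈ T₂, p i := by
      apply Finset.sum_pos (fun i _ => hpos i)
      exact ⟨⟨k, by omega⟩, Finset.mem_filter.mpr ⟨Finset.mem_univ _, by simp; omega⟩⟩
    have hmin_pos : 0 < min (Q j) (1 - Q j) := lt_min hQpos (by linarith)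
    by_cases hcase : j < S
    · rw [if_pos hcase]
      apply key_bound T₁ p pmax _ (j + 1) hpm hple hmin_pos (fun i _ => hpos i)
      · intro i hi
        apply hub
        have hil : (i : ℕ) ≤ j := by simpa [hT₁] using hi
        intro h
        rw [h] at hil
        omega
      · rw [← hQ1]; exact min_le_left _ _
      · rw [← hQ1]; linarith
      · have h := Finset.card_le_card_of_injOn (s := T₁) (t := Finset.range (j + 1))
          (fun i : Fin (k + 1) => (i : ℕ))
          (fun i hi => Finset.mem_range.mpr (by
            have : (i : ℕ) ≤ j := by simpa [hT₁] using hi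
            show (i : ℕ) < j + 1
            omega))
          (fun a _ b _ h => Fin.val_injective h)
        simpa using h
    · rw [if_neg hcase]
      apply key_bound T₂ p pmax _ (k - j) hpm hple hmin_pos (fun i _ => hpos i)
      · intro i hi
        apply hub
        have hil : ¬ (i : ℕ) ≤ j := by simpa [hT₂] using hi
        intro h
        rw [h] at hil
        omega
      · have : (1 : ℝ) - Q j = ∑ i ∈ T₂, p i := by linarith
        rw [← this]; exact min_le_right _ _
      · linarith
      · have h := Finset.card_le_card_of_injOn (s := T₂) (t := Finset.Ico (j + 1) (k + 1))
          (fun i : Fin (k + 1) => (i : ℕ))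
          (fun i hi => Finset.mem_Ico.mpr (by
            have h1 : ¬ (i : ℕ) ≤ j := by simpa [hT₂] using hi
            have h2 := i.isLt
            show j + 1 ≤ (i : ℕ) ∧ (i : ℕ) < k + 1
            omega))
          (fun a _ b _ h => Fin.val_injective h)
        simpa using h
  -- convert to logb and sum up
  have step : ∀ j ∈ Finset.range k,
      2 * min (Q j) (1 - Q j) * Real.logb 2 (4 / min (Q j) (1 - Q j)) ≤
        ((2 * (if j < S then j + 1 else k - j) : ℕ) : ℝ) * (C / Real.log 2) := by
    intro j hj
    have h := key j hj
    rw [Real.logb]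
    calc 2 * min (Q j) (1 - Q j) * (Real.log (4 / min (Q j) (1 - Q j)) / Real.log 2)
        = 2 * (min (Q j) (1 - Q j) * Real.log (4 / min (Q j) (1 - Q j))) * (Real.log 2)⁻¹ := by
          ring
      _ ≤ 2 * (((if j < S then j + 1 else k - j : ℕ) : ℝ) * C) * (Real.log 2)⁻¹ := by
          apply mul_le_mul_of_nonneg_right (by linarith) (inv_nonneg.mpr hlog2.le)
      _ = ((2 * (if j < S then j + 1 else k - j) : ℕ) : ℝ) * (C / Real.log 2) := by
          push_cast; ring
  have hcount : (∑ j ∈ Finset.range k,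
      ((2 * (if j < S then j + 1 else k - j) : ℕ) : ℝ)) ≤ (k : ℝ) * (k + 1) := by
    have h := count_sum S k hSk
    calc (∑ j ∈ Finset.range k, ((2 * (if j < S then j + 1 else k - j) : ℕ) : ℝ))
        = ((∑ j ∈ Finset.range k, 2 * (if j < S then j + 1 else k - j) : ℕ) : ℝ) := by
          rw [Nat.cast_sum]
      _ ≤ ((k * (k + 1) : ℕ) : ℝ) := by exact_mod_cast h
      _ = (k : ℝ) * (k + 1) := by push_cast; ring
  have goal1 : (∑ j ∈ Finset.range k,
      2 * min (Q j) (1 - Q j) * Real.logb 2 (4 / min (Q j) (1 - Q j))) ≤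
      k * (k + 1) * pmax * Real.logb 2 (4 / pmax) := by
    calc (∑ j ∈ Finset.range k,
        2 * min (Q j) (1 - Q j) * Real.logb 2 (4 / min (Q j) (1 - Q j)))
        ≤ ∑ j ∈ Finset.range k,
            ((2 * (if j < S then j + 1 else k - j) : ℕ) : ℝ) * (C / Real.log 2) :=
          Finset.sum_le_sum step
      _ = (∑ j ∈ Finset.range k,
            ((2 * (if j < S then j + 1 else k - j) : ℕ) : ℝ)) * (C / Real.log 2) := by
          rw [← Finset.sum_mul]
      _ ≤ (k : ℝ) * (k + 1) * (C / Real.log 2) := by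
          apply mul_le_mul_of_nonneg_right hcount (div_nonneg hC0 hlog2.le)
      _ = k * (k + 1) * pmax * Real.logb 2 (4 / pmax) := by
          rw [Real.logb, hC]; ring
  refine ⟨goal1, le_trans goal1 ?_⟩
  have hk1 : (1 : ℝ) ≤ (k : ℝ) := by exact_mod_cast hk
  have h23 : (2 : ℝ) / 3 < Real.log 2 := by nlinarith [Real.log_two_gt_d9]
  have hL0 : 0 ≤ Real.log (4 / pmax) := by
    apply Real.log_nonneg
    rw [le_div_iff₀ hpm]; linarith
  have heq : (k : ℝ) * (k + 1) * pmax * Real.logb 2 (4 / pmax)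
      = ((k : ℝ) * (k + 1) * pmax * Real.log (4 / pmax)) / Real.log 2 := by
    rw [Real.logb]; ring
  rw [heq, div_le_iff₀ hlog2]
  have h1 : (k : ℝ) * (k + 1) ≤ 2 * (k : ℝ) ^ 2 := by nlinarith
  have h2 : 2 * (k : ℝ) ^ 2 ≤ 3 * (k : ℝ) ^ 2 * Real.log 2 := by nlinarith [sq_nonneg (k : ℝ)]
  have hA : 0 ≤ pmax * Real.log (4 / pmax) := mul_nonneg hpm.le hL0
  nlinarith [mul_le_mul_of_nonneg_right h1 hA, mul_le_mul_of_nonneg_right h2 hA,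
    mul_le_mul_of_nonneg_right (mul_le_mul_of_nonneg_right h2 hA) hL0]
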